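/- arXiv:1712.09927 — 2 statements merged into one kernel-verified Lean document; each statement's English description precedes it below -/
import Mathlib

section
/- Let C ⊂ ℚ^{n+1} be a full-dimensional pointed rational polyhedral cone with primitive ray generators w_1, …, w_s, and suppose C is Gorenstein, i.e., there exists a (unique) lattice point u ∈ ℤ^{n+1} in the interior of C with C° ∩ ℤ^{n+1} = u + (C ∩ ℤ^{n+1}). Then u can be written as u = Σ_i λ_i w_i with 0 ≤ λ_i ≤ 1 for all i such that the set {w_i : λ_i ≠ 0} is linearly independent. -/
lemma cone_carath {s : ℕ} {V : Type*} [AddCommGroup V] [Module ℚ V]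
    (w : Fin s → V) (u : V) :
    ∀ N : ℕ, ∀ t : Fin s → ℚ,
      (Finset.univ.filter (fun i => t i ≠ 0)).card ≤ N →
      (∀ i, 0 ≤ t i) → u = ∑ i, t i • w i →
      ∃ lam : Fin s → ℚ, (∀ i, 0 ≤ lam i) ∧ u = ∑ i, lam i • w i ∧
        LinearIndependent ℚ (fun i : {i : Fin s // lam i ≠ 0} => w i.1) := by
  intro N
  induction N with
  | zero =>
      intro t hcard ht hu
      haveI : IsEmpty {i : Fin s // t i ≠ 0} := by
        rw [Nat.le_zero, Finset.card_eq_zero, Finset.filter_eq_empty_iff] at hcard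
        exact ⟨fun i => (hcard (Finset.mem_univ i.1)) i.2⟩
      exact ⟨t, ht, hu, linearIndependent_empty_type⟩
  | succ N ih =>
      intro t hcard ht hu
      by_cases hLI : LinearIndependent ℚ (fun i : {i : Fin s // t i ≠ 0} => w i.1)
      · exact ⟨t, ht, hu, hLI⟩
      · obtain ⟨g, hgsum, i₀, hgi₀⟩ := Fintype.not_linearIndependent_iff.mp hLI
        set c : Fin s → ℚ := fun i => if h : t i ≠ 0 then g ⟨i, h⟩ else 0 with hc
        have hcsum : ∑ i, c i • w i = 0 := by
          have h1 : ∑ i, c i • w i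
              = ∑ i ∈ Finset.univ.filter (fun i => t i ≠ 0), c i • w i :=
            (Finset.sum_filter_of_ne (fun x _ hx => by
              by_contra h
              exact hx (by simp [hc, h]))).symm
          have h2 : ∑ i ∈ Finset.univ.filter (fun i => t i ≠ 0), c i • w i
              = ∑ i : {i : Fin s // t i ≠ 0}, c i.1 • w i.1 :=
            Finset.sum_subtype _ (by simp) _
          rw [h1, h2, ← hgsum]
          exact Finset.sum_congr rfl (fun i _ => by simp [hc, i.2])
        have hcsupp : ∀ i, t i = 0 → c i = 0 := by
          intro i hi; simp [hc, hi]
        have hci₀ : c i₀.1 ≠ 0 := by simpa [hc, i₀.2] using hgi₀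
        -- get d with a positive entry
        obtain ⟨d, ⟨i₁, hdi₁⟩, hdsum, hdsupp⟩ :
            ∃ d : Fin s → ℚ, (∃ i, 0 < d i) ∧ ∑ i, d i • w i = 0 ∧
              ∀ i, t i = 0 → d i = 0 := by
          rcases lt_or_gt_of_ne hci₀ with h | h
          · exact ⟨-c, ⟨i₀.1, by simpa using h⟩, by simp [hcsum], fun i hi => by simp [hcsupp i hi]⟩
          · exact ⟨c, ⟨i₀.1, h⟩, hcsum, hcsupp⟩
        set S : Finset (Fin s) := Finset.univ.filter (fun i => 0 < d i) with hS
        have hSne : S.Nonempty := ⟨i₁, by simp [hS, hdi₁]⟩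
        set μ : ℚ := S.inf' hSne (fun i => t i / d i) with hμ
        obtain ⟨i₂, hi₂S, hi₂⟩ := S.exists_mem_eq_inf' hSne (fun i => t i / d i)
        have hdi₂ : 0 < d i₂ := by simpa [hS] using hi₂S
        have hμ0 : 0 ≤ μ := by
          rw [hμ, hi₂]; exact div_nonneg (ht i₂) hdi₂.le
        set t' : Fin s → ℚ := fun i => t i - μ * d i with ht'
        have ht'0 : ∀ i, 0 ≤ t' i := by
          intro i
          rcases le_or_gt (d i) 0 with h | h
          · have : μ * d i ≤ 0 := mul_nonpos_of_nonneg_of_nonpos hμ0 h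
            simp only [ht']; linarith [ht i]
          · have : μ ≤ t i / d i := Finset.inf'_le _ (by simp [hS, h])
            have := (le_div_iff₀ h).mp this
            simp only [ht']; linarith
        have ht'sum : u = ∑ i, t' i • w i := by
          simp only [ht', sub_smul, Finset.sum_sub_distrib, mul_smul]
          rw [← Finset.smul_sum, hdsum, smul_zero, sub_zero, hu]
        have hsub : Finset.univ.filter (fun i => t' i ≠ 0) ⊂
            Finset.univ.filter (fun i => t i ≠ 0) := by
          constructor
          · intro i hi
            simp only [Finset.mem_filter, Finset.mem_univ, true_and] at hi ⊢
            intro h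
            exact hi (by simp [ht', h, hdsupp i h])
          · intro hcon
            have hti₂ : t i₂ ≠ 0 := by
              intro h
              rw [hdsupp i₂ h] at hdi₂; exact lt_irrefl 0 hdi₂
            have := hcon (Finset.mem_filter.mpr ⟨Finset.mem_univ i₂, hti₂⟩)
            simp only [Finset.mem_filter, Finset.mem_univ, true_and] at this
            apply this
            show t i₂ - μ * d i₂ = 0
            rw [hμ, hi₂]
            field_simp
            ring
        have hcard' : (Finset.univ.filter (fun i => t' i ≠ 0)).card ≤ N := by
          have := Finset.card_lt_card hsub
          omega
        exact ih t' hcard' ht'0 ht'sum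



/-- key step of Lemma 4.1. Let `C ⊆ ℚ^{n+1}` be a
full-dimensional pointed rational polyhedral cone with primitive ray generators
`w_1, …, w_s`, and suppose `C` is Gorenstein: there is a lattice point `u` in
the interior of `C` with `C° ∩ ℤ^{n+1} = u + (C ∩ ℤ^{n+1})`.  Then
`u = ∑ λ_i w_i` with `0 ≤ λ_i ≤ 1` and `{w_i : λ_i ≠ 0}` linearly
independent. -/
theorem stmt_6 {n s : ℕ} (w : Fin s → (Fin (n + 1) → ℤ))
    (hprim : ∀ i, Finset.univ.gcd (fun j => w i j) = 1)
    (C : Set (Fin (n + 1) → ℚ))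
    (hC : C = {x | ∃ t : Fin s → ℚ, (∀ i, 0 ≤ t i) ∧
        x = ∑ i, t i • (fun j => ((w i j : ℚ)))})
    (hfull : (interior C).Nonempty)
    (hpointed : ∀ x ∈ C, -x ∈ C → x = 0)
    (u : Fin (n + 1) → ℤ)
    (hu : (fun j => (u j : ℚ)) ∈ interior C)
    (hGor : ∀ x : Fin (n + 1) → ℤ,
      ((fun j => (x j : ℚ)) ∈ interior C ↔
        (fun j => ((x j - u j : ℤ) : ℚ)) ∈ C)) :
    ∃ lam : Fin s → ℚ, (∀ i, 0 ≤ lam i ∧ lam i ≤ 1) ∧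
      (fun j => (u j : ℚ)) = ∑ i, lam i • (fun j => (w i j : ℚ)) ∧
      LinearIndependent ℚ
        (fun i : {i : Fin s // lam i ≠ 0} => (fun j => (w i.1 j : ℚ))) := by
  set wQ : Fin s → (Fin (n + 1) → ℚ) := fun i => (fun j => (w i j : ℚ)) with hwQ
  set uQ : Fin (n + 1) → ℚ := fun j => (u j : ℚ) with huQ
  -- u ∈ C, get a representation
  have huC : uQ ∈ C := interior_subset hu
  rw [hC] at huC
  obtain ⟨t, ht0, htsum⟩ := huC
  -- Carathéodory
  obtain ⟨lam, hlam0, hlamsum, hlamLI⟩ :=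
    cone_carath wQ uQ (Finset.univ.filter (fun i => t i ≠ 0)).card t le_rfl ht0 htsum
  refine ⟨lam, fun i => ⟨hlam0 i, ?_⟩, hlamsum, hlamLI⟩
  -- show lam i ≤ 1
  by_contra hgt
  push_neg at hgt
  have hlami : lam i ≠ 0 := ne_of_gt (by linarith)
  -- w i as element of C
  have hwiC : wQ i ∈ C := by
    rw [hC]
    refine ⟨fun j => if j = i then 1 else 0, fun j => by by_cases h : j = i <;> simp [h], ?_⟩
    simp [hwQ]
  -- p = uQ - lam i • wQ i ∈ C
  have hpC : uQ - lam i • wQ i ∈ C := by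
    rw [hC]
    refine ⟨fun j => if j = i then 0 else lam j, fun j => by by_cases h : j = i <;> simp [h, hlam0 j], ?_⟩
    have : ∑ j, lam j • wQ j
        = ∑ j, ((if j = i then 0 else lam j) • wQ j + (if j = i then lam i • wQ i else 0)) := by
      refine Finset.sum_congr rfl (fun j _ => ?_)
      by_cases h : j = i <;> simp [h]
    rw [hlamsum, this, Finset.sum_add_distrib, Finset.sum_ite_eq' Finset.univ i]
    simp [hwQ]
  set θ : ℚ := (lam i)⁻¹ with hθ
  have hθ0 : 0 < θ := by positivity
  have hθ1 : θ < 1 := by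
    rw [hθ]
    exact inv_lt_one_of_one_lt₀ hgt
  set p : Fin (n + 1) → ℚ := uQ - lam i • wQ i with hp
  -- the affine homeomorphism x ↦ (1-θ)•x + θ•p
  have h1θ : (1 - θ) ≠ 0 := by
    intro h
    rw [sub_eq_zero] at h
    exact absurd h.symm (ne_of_lt hθ1)
  set f : (Fin (n + 1) → ℚ) ≃ₜ (Fin (n + 1) → ℚ) :=
    (Homeomorph.smulOfNeZero (1 - θ) h1θ).trans (Homeomorph.addRight (θ • p)) with hf
  have hfdef : ∀ x, f x = (1 - θ) • x + θ • p := fun x => rfl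
  -- convex combination stays in C
  have hconv : ∀ x ∈ C, (1 - θ) • x + θ • p ∈ C := by
    intro x hx
    rw [hC] at hx ⊢
    obtain ⟨a, ha0, hax⟩ := hx
    have hpC' := hpC
    rw [hC] at hpC'
    obtain ⟨b, hb0, hbp⟩ := hpC'
    refine ⟨fun j => (1 - θ) * a j + θ * b j,
      fun j => add_nonneg (mul_nonneg (by linarith) (ha0 j)) (mul_nonneg hθ0.le (hb0 j)), ?_⟩
    rw [hax, hbp]
    simp only [add_smul, mul_smul, Finset.sum_add_distrib, Finset.smul_sum]
  -- image of interior is open and inside C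
  have himg : f '' interior C ⊆ interior C := by
    apply interior_maximal
    · rintro y ⟨x, hx, rfl⟩
      exact hconv x (interior_subset hx)
    · exact f.isOpenMap _ isOpen_interior
  have hmint : uQ - wQ i ∈ interior C := by
    have : f uQ ∈ interior C := himg ⟨uQ, hu, rfl⟩
    have heq : f uQ = uQ - wQ i := by
      rw [hfdef, hp]
      rw [smul_sub, smul_smul, hθ, inv_mul_cancel₀ hlami]
      module
    rwa [heq] at this
  -- Gorenstein: -w i ∈ C
  have hneg : -wQ i ∈ C := by
    have h1 : (fun j => (((u j - w i j : ℤ)) : ℚ)) ∈ interior C := by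
      have : (fun j => (((u j - w i j : ℤ)) : ℚ)) = uQ - wQ i := by
        funext j; push_cast; simp [huQ, hwQ]
      rw [this]; exact hmint
    have h2 := (hGor (fun j => u j - w i j)).mp h1
    have : (fun j => (((u j - w i j) - u j : ℤ) : ℚ)) = -wQ i := by
      funext j; push_cast; simp [hwQ]
    rwa [this] at h2
  have hw0 : wQ i = 0 := hpointed (wQ i) hwiC hneg
  have hwz : ∀ j, w i j = 0 := by
    intro j
    have := congrFun hw0 j
    simpa [hwQ] using this
  have : Finset.univ.gcd (fun j => w i j) = 0 :=
    Finset.gcd_eq_zero_iff.mpr (fun j _ => hwz j)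
  rw [hprim i] at this
  exact one_ne_zero this
end

section
/- Let C ⊂ ℚ^{n+1} be a simplicial full-dimensional pointed rational cone with primitive ray generators w_1, …, w_{n+1}, and suppose C is Gorenstein with Gorenstein point u (i.e., C° ∩ ℤ^{n+1} = u + (C ∩ ℤ^{n+1})). Then u = Σ λ_i w_i with 0 < λ_i ≤ 1 for all i and Σ λ_i < n+1. -/
lemma stmt8_interior_orthant (m : ℕ) :
    interior {t : Fin m → ℚ | ∀ i, 0 ≤ t i} = {t : Fin m → ℚ | ∀ i, 0 < t i} := by
  apply Set.Subset.antisymm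
  · intro x hx i
    obtain ⟨ε, hε, hball⟩ := Metric.mem_nhds_iff.mp (mem_interior_iff_mem_nhds.mp hx)
    obtain ⟨q, hq0, hqε⟩ := exists_rat_btwn (show (0:ℝ) < ε from hε)
    have hq0' : (0:ℚ) < q := by exact_mod_cast hq0
    have hy : Function.update x i (x i - q) ∈ Metric.ball x ε := by
      rw [Metric.mem_ball, dist_pi_lt_iff hε]
      intro k
      rcases eq_or_ne k i with rfl | hk
      · rw [Function.update_self, Rat.dist_eq]
        push_cast
        rw [abs_of_nonpos (by linarith)]
        linarith
      · rw [Function.update_of_ne hk, dist_self]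
        exact hε
    have h2 := hball hy i
    simp only [Set.mem_setOf_eq, Function.update_self] at h2
    linarith
  · rw [show {t : Fin m → ℚ | ∀ i, 0 < t i}
        = Set.pi Set.univ (fun _ => Set.Ioi (0:ℚ)) by ext; simp [Set.mem_pi]]
    exact interior_maximal
      (fun x hx i => le_of_lt (hx i (Set.mem_univ i)))
      (isOpen_set_pi Set.finite_univ fun a _ => isOpen_Ioi)

/-- Let `C ⊆ ℚ^{n+1}` be a simplicial full-dimensional pointed
rational cone with primitive ray generators `w_1, …, w_{n+1}` and Gorenstein
point `u` (i.e. `C° ∩ ℤ^{n+1} = u + (C ∩ ℤ^{n+1})`).  Then `u = ∑ λ_i w_i` with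
`0 < λ_i ≤ 1` for all `i`, `∑ λ_i ≤ n+1`, and `∑ λ_i = n+1` if and only if all
`λ_i = 1`. -/
theorem stmt_8 {n : ℕ} (w : Fin (n + 1) → (Fin (n + 1) → ℤ))
    (hprim : ∀ i, Finset.univ.gcd (fun j => w i j) = 1)
    (hsimp : LinearIndependent ℚ (fun i => (fun j => (w i j : ℚ))))
    (C : Set (Fin (n + 1) → ℚ))
    (hC : C = {x | ∃ t : Fin (n + 1) → ℚ, (∀ i, 0 ≤ t i) ∧
        x = ∑ i, t i • (fun j => ((w i j : ℚ)))})
    (u : Fin (n + 1) → ℤ)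
    (hGor : ∀ x : Fin (n + 1) → ℤ,
      ((fun j => (x j : ℚ)) ∈ interior C ↔
        (fun j => ((x j - u j : ℤ) : ℚ)) ∈ C)) :
    ∃ lam : Fin (n + 1) → ℚ,
      (∀ i, 0 < lam i ∧ lam i ≤ 1) ∧
      (fun j => (u j : ℚ)) = ∑ i, lam i • (fun j => (w i j : ℚ)) ∧
      (∑ i, lam i) ≤ n + 1 ∧
      ((∑ i, lam i) = n + 1 ↔ ∀ i, lam i = 1) := by
  set W : Fin (n+1) → (Fin (n+1) → ℚ) := fun i => (fun j => (w i j : ℚ)) with hW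
  have hcard : Fintype.card (Fin (n+1)) = Module.finrank ℚ (Fin (n+1) → ℚ) := by simp
  let b : Module.Basis (Fin (n+1)) ℚ (Fin (n+1) → ℚ) :=
    basisOfLinearIndependentOfCardEqFinrank hsimp hcard
  have hb : ∀ i, b i = W i := by
    intro i
    rw [show b i = (⇑b) i from rfl, coe_basisOfLinearIndependentOfCardEqFinrank]
  -- membership in C in terms of coordinates
  have hmemC : ∀ x, x ∈ C ↔ ∀ i, 0 ≤ b.repr x i := by
    intro x
    constructor
    · rintro hx i
      rw [hC] at hx
      obtain ⟨t, ht, rfl⟩ := hx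
      have hsum : (∑ i, t i • (fun j => ((w i j : ℚ)))) = ∑ i, t i • b i :=
        Finset.sum_congr rfl fun i _ => by rw [hb]
      rw [hsum]
      have h3 : (b.repr (∑ i, t i • b i)) i = t i := congrFun (b.repr_sum_self t) i
      rw [h3]
      exact ht i
    · intro hx
      rw [hC]
      exact ⟨fun i => b.repr x i, hx, by
        conv_lhs => rw [← b.sum_repr x]
        refine Finset.sum_congr rfl fun i _ => ?_
        rw [hb]⟩
  -- interior of C
  have hintC : interior C = {x | ∀ i, 0 < b.repr x i} := by
    have hcont1 : Continuous ⇑b.equivFun := LinearMap.continuous_on_pi b.equivFun.toLinearMap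
    have hcont2 : Continuous ⇑b.equivFun.symm :=
      LinearMap.continuous_on_pi b.equivFun.symm.toLinearMap
    let h : (Fin (n+1) → ℚ) ≃ₜ (Fin (n+1) → ℚ) :=
      { toEquiv := b.equivFun.toEquiv, continuous_toFun := hcont1,
        continuous_invFun := hcont2 }
    have hCpre : C = ⇑h ⁻¹' {t | ∀ i, 0 ≤ t i} := by
      ext x
      rw [hmemC]
      simp only [Set.mem_preimage, Set.mem_setOf_eq]
      constructor <;> intro hx i <;>
        simpa [h, Module.Basis.equivFun_apply] using hx i
    rw [hCpre, ← Homeomorph.preimage_interior, stmt8_interior_orthant]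
    ext x
    simp [h, Module.Basis.equivFun_apply]
  -- the coordinates of u
  set uQ : Fin (n+1) → ℚ := fun j => (u j : ℚ) with huQ
  set lam : Fin (n+1) → ℚ := fun i => b.repr uQ i with hlam
  -- coordinate description of basis vectors
  have hWrepr : ∀ i k', b.repr (W i) k' = if i = k' then 1 else 0 := by
    intro i k'
    rw [← hb, b.repr_self]
    simp [Finsupp.single_apply]
  -- u is in the interior of C
  have hu_int : uQ ∈ interior C := by
    refine (hGor u).mpr ?_
    have h0 : (fun j => ((u j - u j : ℤ) : ℚ)) = (0 : Fin (n+1) → ℚ) := by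
      funext j; simp
    rw [h0, hmemC]
    intro i; simp
  have hpos : ∀ i, 0 < lam i := by
    rw [hintC] at hu_int
    exact hu_int
  -- each lam i ≤ 1
  have hle : ∀ i, lam i ≤ 1 := by
    intro j
    by_contra hgt
    push_neg at hgt
    set y : Fin (n+1) → ℤ := fun k => u k + ∑ i ∈ Finset.univ.erase j, w i k - w j k with hy
    have hyQ : (fun k => (y k : ℚ)) = uQ + ∑ i ∈ Finset.univ.erase j, W i - W j := by
      funext k
      simp only [hy, huQ, hW, Pi.add_apply, Pi.sub_apply, Finset.sum_apply]
      push_cast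
      ring
    have hrepr : ∀ k, b.repr (fun k => (y k : ℚ)) k
        = lam k + (if k = j then (-1 : ℚ) else 1) := by
      intro k
      rw [hyQ, map_sub, map_add, map_sum]
      simp only [Finsupp.coe_sub, Finsupp.coe_add, Finsupp.coe_finset_sum, Pi.sub_apply,
        Pi.add_apply, Finset.sum_apply]
      rw [hWrepr j k]
      have hsum : ∑ i ∈ Finset.univ.erase j, (b.repr (W i)) k
          = if k ∈ Finset.univ.erase j then (1:ℚ) else 0 := by
        rw [Finset.sum_congr rfl fun i _ => hWrepr i k]
        exact Finset.sum_ite_eq' _ k (fun _ => (1:ℚ))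
      rw [hsum]
      rcases eq_or_ne k j with rfl | hk
      · norm_num
        show lam k - 1 = lam k + -1
        ring
      · simp [hlam, hk, Ne.symm hk]
    have hyint : (fun k => (y k : ℚ)) ∈ interior C := by
      rw [hintC]
      intro k
      rw [hrepr k]
      rcases eq_or_ne k j with rfl | hk
      · rw [if_pos rfl]
        linarith
      · rw [if_neg hk]
        linarith [hpos k]
    have hyC := (hGor y).mp hyint
    have hsub : (fun k => ((y k - u k : ℤ) : ℚ)) = (fun k => (y k : ℚ)) - uQ := by
      funext k
      simp only [huQ, Pi.sub_apply]
      push_cast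
      ring
    rw [hsub, hmemC] at hyC
    have := hyC j
    rw [map_sub] at this
    simp only [Finsupp.coe_sub, Pi.sub_apply] at this
    rw [hrepr j, if_pos rfl] at this
    have hlj : (b.repr uQ) j = lam j := rfl
    rw [hlj] at this
    linarith
  refine ⟨lam, fun i => ⟨hpos i, hle i⟩, ?_, ?_, ?_⟩
  · show uQ = _
    conv_lhs => rw [← b.sum_repr uQ]
    refine Finset.sum_congr rfl fun i _ => ?_
    rw [hb]
  · calc ∑ i, lam i ≤ ∑ _i : Fin (n+1), (1:ℚ) := Finset.sum_le_sum fun i _ => hle i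
    _ = n + 1 := by simp
  · have h1 : (∑ _i : Fin (n+1), (1:ℚ)) = (n:ℚ) + 1 := by simp
    rw [← h1, Finset.sum_eq_sum_iff_of_le (fun i _ => hle i)]
    simp
end
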